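/- Let μ > 0. Then for every x ∈ [π/2, π], the derivative of the solution ω₂ satisfies ω₂'(x,μ) = (1/δ)·cos(μ(x − π/2))·ω₁'(π/2, μ) − (μ/δ)·sin(μ(x − π/2))·ω₁(π/2, μ) − ∫_{π/2}^{x} q(θ)·cos(μ(x − θ))·ω₂(θ − Δ(θ), μ) dθ. -/

import Mathlib

open Real Set

theorem stmt3
    (a₁ a₁' a₂ a₂' b δ : ℝ) (hδ : δ ≠ 0) (ha₂' : a₂' ≠ 0)
    (q Δ : ℝ → ℝ)
    (hq1 : ContinuousOn q (Ico 0 (π/2))) (hq2 : ContinuousOn q (Ioc (π/2) π))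
    (hqlim1 : ∃ L : ℝ, Filter.Tendsto q (nhdsWithin (π/2) (Iio (π/2))) (nhds L))
    (hqlim2 : ∃ L : ℝ, Filter.Tendsto q (nhdsWithin (π/2) (Ioi (π/2))) (nhds L))
    (hΔ1 : ContinuousOn Δ (Ico 0 (π/2))) (hΔ2 : ContinuousOn Δ (Ioc (π/2) π))
    (hΔlim1 : ∃ L : ℝ, Filter.Tendsto Δ (nhdsWithin (π/2) (Iio (π/2))) (nhds L))
    (hΔlim2 : ∃ L : ℝ, Filter.Tendsto Δ (nhdsWithin (π/2) (Ioi (π/2))) (nhds L))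
    (hΔ0 : ∀ x, 0 ≤ Δ x)
    (hret1 : ∀ x ∈ Ico 0 (π/2), 0 ≤ x - Δ x)
    (hret2 : ∀ x ∈ Ioc (π/2) π, π/2 ≤ x - Δ x)
    (μ : ℝ) (hμ : 0 < μ)
    (ω₁ ω₁d ω₁dd : ℝ → ℝ)
    (hder1 : ∀ x ∈ Icc 0 (π/2), HasDerivWithinAt ω₁ (ω₁d x) (Icc 0 (π/2)) x)
    (hder2 : ∀ x ∈ Icc 0 (π/2), HasDerivWithinAt ω₁d (ω₁dd x) (Icc 0 (π/2)) x)
    (hcont : ContinuousOn ω₁dd (Icc 0 (π/2)))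
    (hode : ∀ x ∈ Icc 0 (π/2), ω₁dd x + q x * ω₁ (x - Δ x) = -μ^2 * ω₁ x)
    (hinit : ω₁ 0 = μ * a₂' + a₂)
    (hinit' : ω₁d 0 = μ * a₁' + a₁)
    (ω₂ ω₂d ω₂dd : ℝ → ℝ)
    (hder1' : ∀ x ∈ Icc (π/2) π, HasDerivWithinAt ω₂ (ω₂d x) (Icc (π/2) π) x)
    (hder2' : ∀ x ∈ Icc (π/2) π, HasDerivWithinAt ω₂d (ω₂dd x) (Icc (π/2) π) x)
    (hcont' : ContinuousOn ω₂dd (Icc (π/2) π))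
    (hode' : ∀ x ∈ Icc (π/2) π, ω₂dd x + q x * ω₂ (x - Δ x) = -μ^2 * ω₂ x)
    (hifc : ω₂ (π/2) = δ⁻¹ * ω₁ (π/2))
    (hifc' : ω₂d (π/2) = δ⁻¹ * ω₁d (π/2)) :
    ∀ x ∈ Icc (π/2) π,
      ω₂d x = (1/δ) * Real.cos (μ * (x - π/2)) * ω₁d (π/2)
        - (μ/δ) * Real.sin (μ * (x - π/2)) * ω₁ (π/2)
        - ∫ θ in (π/2)..x, q θ * Real.cos (μ * (x - θ)) * ω₂ (θ - Δ θ) := by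
  intro x hx
  obtain ⟨hx1, hx2⟩ := hx
  have hω₂cont : ContinuousOn ω₂ (Icc (π/2) π) :=
    fun t ht => (hder1' t ht).continuousWithinAt
  have hω₂dcont : ContinuousOn ω₂d (Icc (π/2) π) :=
    fun t ht => (hder2' t ht).continuousWithinAt
  rcases eq_or_lt_of_le hx1 with rfl | hlt
  · simp [hifc', one_div]
  -- x > π/2
  obtain ⟨Lq, hLq⟩ := hqlim2
  obtain ⟨LΔ, hLΔ⟩ := hΔlim2
  have hππ : π/2 < π := by nlinarith [pi_pos]
  have hmem : ∀ᶠ θ in nhdsWithin (π/2) (Ioi (π/2)), θ ∈ Ioc (π/2) π := by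
    have h2 : ∀ᶠ θ in nhdsWithin (π/2) (Ioi (π/2)), θ < π :=
      eventually_nhdsWithin_of_eventually_nhds (eventually_lt_nhds hππ)
    filter_upwards [self_mem_nhdsWithin, h2] with θ h1 h2
    exact ⟨h1, h2.le⟩
  have hLΔ0 : LΔ = 0 := by
    have h1 : 0 ≤ LΔ :=
      ge_of_tendsto hLΔ (Filter.Eventually.of_forall fun θ => hΔ0 θ)
    have htend : Filter.Tendsto (fun θ => θ - Δ θ) (nhdsWithin (π/2) (Ioi (π/2)))
        (nhds (π/2 - LΔ)) :=
      ((Filter.tendsto_id (x := nhds (π/2))).mono_left nhdsWithin_le_nhds).sub hLΔ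
    have h2 : π/2 ≤ π/2 - LΔ := by
      refine ge_of_tendsto htend ?_
      filter_upwards [hmem] with θ hθ
      exact hret2 θ hθ
    linarith
  -- extended functions, continuous on Icc (π/2) x
  set Q : ℝ → ℝ := fun θ => if θ = π/2 then Lq else q θ with hQdef
  set D : ℝ → ℝ := fun θ => if θ = π/2 then 0 else Δ θ with hDdef
  have hIccsub : Icc (π/2) x ⊆ Icc (π/2) π := Icc_subset_Icc le_rfl hx2
  have hIocsub : Ioc (π/2) x ⊆ Ioc (π/2) π := Ioc_subset_Ioc le_rfl hx2
  have extend_cont : ∀ (f : ℝ → ℝ) (L : ℝ), ContinuousOn f (Ioc (π/2) π) →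
      Filter.Tendsto f (nhdsWithin (π/2) (Ioi (π/2))) (nhds L) →
      ContinuousOn (fun θ => if θ = π/2 then L else f θ) (Icc (π/2) x) := by
    intro f L hf hL
    intro θ hθ
    rcases eq_or_lt_of_le hθ.1 with rfl | hθ1
    · -- at left endpoint
      have hsub : Icc (π/2) x ⊆ {π/2} ∪ Ioi (π/2) := by
        intro t ht
        rcases eq_or_lt_of_le ht.1 with rfl | h
        · exact Or.inl rfl
        · exact Or.inr h
      have key : ContinuousWithinAt (fun θ => if θ = π/2 then L else f θ)
          ({π/2} ∪ Ioi (π/2)) (π/2) := by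
        unfold ContinuousWithinAt
        have hv : (fun θ => if θ = π/2 then L else f θ) (π/2) = L := by simp
        rw [hv, nhdsWithin_union, nhdsWithin_singleton]
        refine Filter.Tendsto.sup ?_ ?_
        · simpa using tendsto_pure_nhds (fun θ => if θ = π/2 then L else f θ) (π/2)
        · refine hL.congr' ?_
          filter_upwards [self_mem_nhdsWithin] with t ht
          rw [if_neg (ne_of_gt ht)]
      exact key.mono hsub
    · -- interior/right points
      have hcong : EqOn (fun θ => if θ = π/2 then L else f θ) f (Ioc (π/2) x) := by
        intro t ht
        simp only [if_neg (ne_of_gt ht.1)]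
      have h1 : ContinuousWithinAt f (Ioc (π/2) x) θ :=
        (hf.mono hIocsub) θ ⟨hθ1, hθ.2⟩
      have h2 : ContinuousWithinAt (fun θ => if θ = π/2 then L else f θ) (Ioc (π/2) x) θ := by
        refine h1.congr hcong ?_
        simp [ne_of_gt hθ1]
      refine h2.mono_of_mem_nhdsWithin ?_
      have : Ioi (π/2) ∈ nhds θ := Ioi_mem_nhds hθ1
      have h3 : Icc (π/2) x ∩ Ioi (π/2) ⊆ Ioc (π/2) x := fun t ht => ⟨ht.2, ht.1.2⟩
      exact Filter.mem_of_superset (inter_mem_nhdsWithin _ this) h3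
  have hQcont : ContinuousOn Q (Icc (π/2) x) := extend_cont q Lq hq2 hLq
  have hDcont : ContinuousOn D (Icc (π/2) x) := by
    have := extend_cont Δ LΔ hΔ2 hLΔ
    rwa [hLΔ0] at this
  -- the regularized integrand
  have hmaps : ∀ θ ∈ Icc (π/2) x, θ - D θ ∈ Icc (π/2) π := by
    intro θ hθ
    by_cases h : θ = π/2
    · simp [hDdef, h, le_of_lt hππ]
    · have hθ' : θ ∈ Ioc (π/2) π := ⟨lt_of_le_of_ne hθ.1 (Ne.symm h), hθ.2.trans hx2⟩
      simp only [hDdef, if_neg h]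
      exact ⟨hret2 θ hθ', by nlinarith [hΔ0 θ, hθ'.2]⟩
  have hFcont : ContinuousOn (fun θ => -(Q θ * Real.cos (μ * (x - θ)) * ω₂ (θ - D θ)))
      (Icc (π/2) x) := by
    refine ContinuousOn.neg ?_
    refine ContinuousOn.mul (ContinuousOn.mul hQcont (by fun_prop)) ?_
    exact hω₂cont.comp (continuousOn_id.sub hDcont) hmaps
  -- interval integrability of the actual integrand g
  set g : ℝ → ℝ := fun θ => -(q θ * Real.cos (μ * (x - θ)) * ω₂ (θ - Δ θ)) with hgdef
  have hgint : IntervalIntegrable g MeasureTheory.volume (π/2) x := by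
    rw [intervalIntegrable_iff_integrableOn_Ioc_of_le hx1]
    have hFint : MeasureTheory.IntegrableOn
        (fun θ => -(Q θ * Real.cos (μ * (x - θ)) * ω₂ (θ - D θ))) (Ioc (π/2) x) := by
      refine MeasureTheory.IntegrableOn.mono_set ?_ Ioc_subset_Icc_self
      exact hFcont.integrableOn_compact isCompact_Icc
    refine hFint.congr_fun ?_ measurableSet_Ioc
    intro t ht
    simp only [hgdef, hQdef, hDdef, if_neg (ne_of_gt ht.1)]
  -- the antiderivative
  set G : ℝ → ℝ := fun θ =>
    Real.cos (μ * (x - θ)) * ω₂d θ - μ * Real.sin (μ * (x - θ)) * ω₂ θ with hGdef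
  have hGcont : ContinuousOn G (Icc (π/2) x) := by
    refine ContinuousOn.sub ?_ ?_
    · exact (Continuous.continuousOn (by fun_prop)).mul (hω₂dcont.mono hIccsub)
    · exact (Continuous.continuousOn (by fun_prop)).mul (hω₂cont.mono hIccsub)
  have hGderiv : ∀ θ ∈ Ioo (π/2) x, HasDerivWithinAt G (g θ) (Ioi θ) θ := by
    intro θ hθ
    have hθIcc : θ ∈ Icc (π/2) π := ⟨hθ.1.le, (hθ.2.le).trans hx2⟩
    have hnhds : Icc (π/2) π ∈ nhds θ :=
      Icc_mem_nhds hθ.1 (hθ.2.trans_le hx2)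
    have hω : HasDerivAt ω₂ (ω₂d θ) θ := (hder1' θ hθIcc).hasDerivAt hnhds
    have hωd : HasDerivAt ω₂d (ω₂dd θ) θ := (hder2' θ hθIcc).hasDerivAt hnhds
    have hinner : HasDerivAt (fun t : ℝ => μ * (x - t)) (-μ) θ := by
      simpa using (((hasDerivAt_id θ).const_sub x).const_mul μ)
    have hcos : HasDerivAt (fun t : ℝ => Real.cos (μ * (x - t)))
        (-Real.sin (μ * (x - θ)) * (-μ)) θ :=
      by have h := (Real.hasDerivAt_cos (μ * (x - θ))).comp θ hinner; exact h
    have hsin : HasDerivAt (fun t : ℝ => Real.sin (μ * (x - t)))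
        (Real.cos (μ * (x - θ)) * (-μ)) θ :=
      by have h := (Real.hasDerivAt_sin (μ * (x - θ))).comp θ hinner; exact h
    have hG' : HasDerivAt G
        ((-Real.sin (μ * (x - θ)) * (-μ)) * ω₂d θ + Real.cos (μ * (x - θ)) * ω₂dd θ
          - ((μ * (Real.cos (μ * (x - θ)) * (-μ))) * ω₂ θ
            + μ * Real.sin (μ * (x - θ)) * ω₂d θ)) θ :=
      (hcos.mul hωd).sub ((hsin.const_mul μ).mul hω)
    have hodeθ := hode' θ hθIcc
    have heq : (-Real.sin (μ * (x - θ)) * (-μ)) * ω₂d θ + Real.cos (μ * (x - θ)) * ω₂dd θ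
          - ((μ * (Real.cos (μ * (x - θ)) * (-μ))) * ω₂ θ
            + μ * Real.sin (μ * (x - θ)) * ω₂d θ) = g θ := by
      simp only [hgdef]
      linear_combination Real.cos (μ * (x - θ)) * hodeθ
    rw [heq] at hG'
    exact hG'.hasDerivWithinAt
  have hftc := intervalIntegral.integral_eq_sub_of_hasDeriv_right_of_le hx1 hGcont hGderiv hgint
  have hGx : G x = ω₂d x := by simp [hGdef]
  have hGa : G (π/2) = Real.cos (μ * (x - π/2)) * ω₂d (π/2)
      - μ * Real.sin (μ * (x - π/2)) * ω₂ (π/2) := rfl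
  have hneg : (∫ θ in (π/2)..x, g θ)
      = -∫ θ in (π/2)..x, q θ * Real.cos (μ * (x - θ)) * ω₂ (θ - Δ θ) := by
    simp [hgdef, intervalIntegral.integral_neg]
  rw [hneg, hGx, hGa, hifc, hifc'] at hftc
  have : ω₂d x = Real.cos (μ * (x - π/2)) * (δ⁻¹ * ω₁d (π/2))
      - μ * Real.sin (μ * (x - π/2)) * (δ⁻¹ * ω₁ (π/2))
      - ∫ θ in (π/2)..x, q θ * Real.cos (μ * (x - θ)) * ω₂ (θ - Δ θ) := by linarith
  rw [this]; ring
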